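/- There exists a metric space X that is complete, locally compact, and has exactly two connected components, such that the group of surjective isometries of X has an orbit that is not closed in X. (This answers negatively the question of Gao and Kechris whether the isometry group of a locally compact complete metric space with finitely many connected components must have closed orbits.) -/

import Mathlib

noncomputable section

namespace GK17

open AddCircle

abbrev C : Type := AddCircle (1 : ℝ)

instance : Fact ((0:ℝ) < 1) := ⟨one_pos⟩

def al : ℝ := Real.sqrt 2

lemma al_nonneg : 0 ≤ al := Real.sqrt_nonneg 2

lemma al_le_three : al ≤ 3 := by
  have h2 : al ^ 2 = 2 := Real.sq_sqrt (by norm_num)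
  nlinarith [al_nonneg]

lemma al_irrational : Irrational al := irrational_sqrt_two

/-- key arithmetic fact: no nonzero integer multiple of `al` is an integer. -/
lemma al_combo {p q : ℤ} (hq : q ≠ 0) (h : (q:ℝ) * al = p) : False := by
  have hq' : (q:ℝ) ≠ 0 := Int.cast_ne_zero.mpr hq
  refine al_irrational ⟨(p / q : ℚ), ?_⟩
  push_cast
  field_simp
  linarith

lemma dist_coe_le (x y : ℝ) : dist (x : C) (y : C) ≤ |x - y| := by
  rw [dist_eq_norm, ← AddCircle.coe_sub, AddCircle.norm_eq]
  simp only [inv_one, one_mul, mul_one]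
  simpa using round_le (x - y) 0

lemma dist_le_half (b c : C) : dist b c ≤ 1/2 := by
  rw [dist_eq_norm]
  simpa using AddCircle.norm_le_half_period (1:ℝ) one_ne_zero (x := b - c)

/-- the coupling function between the line and the circle -/
def hf (s : ℝ) (b : C) : ℝ :=
  dist b ((al * s : ℝ) : C) / 4 + dist ((s : ℝ) : C) 0 / 4

lemma hf_nonneg (s : ℝ) (b : C) : 0 ≤ hf s b := by
  have h1 := dist_nonneg (x := b) (y := ((al * s : ℝ) : C))
  have h2 := dist_nonneg (x := ((s : ℝ) : C)) (y := (0 : C))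
  unfold hf; linarith

lemma hf_le (s : ℝ) (b : C) : hf s b ≤ 1/4 := by
  have h1 := dist_le_half b ((al * s : ℝ) : C)
  have h2 := dist_le_half ((s : ℝ) : C) 0
  unfold hf; linarith

lemma hf_lip₁ (s t : ℝ) (b : C) : hf s b ≤ min |s - t| 1 + hf t b := by
  rcases le_total |s - t| 1 with h | h
  · rw [min_eq_left h]
    have e1 : dist b ((al*s:ℝ):C) ≤ dist b ((al*t:ℝ):C) + al * |s - t| := by
      have t1 := dist_triangle b ((al*t:ℝ):C) ((al*s:ℝ):C)
      have t2 : dist ((al*t:ℝ):C) ((al*s:ℝ):C) ≤ |al*t - al*s| := dist_coe_le _ _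
      have t3 : |al*t - al*s| = al * |s - t| := by
        rw [← mul_sub, abs_mul, abs_of_nonneg al_nonneg, abs_sub_comm]
      linarith
    have e2 : dist ((s:ℝ):C) 0 ≤ dist ((t:ℝ):C) 0 + |s - t| := by
      have t1 := dist_triangle ((s:ℝ):C) ((t:ℝ):C) (0:C)
      have t2 := dist_coe_le s t
      linarith
    have h3 := al_le_three
    have habs : (0:ℝ) ≤ |s - t| := abs_nonneg _
    unfold hf; nlinarith
  · rw [min_eq_right h]
    have h1 := hf_le s b
    have h2 := hf_nonneg t b
    linarith

lemma hf_lip₂ (s : ℝ) (b c : C) : hf s b ≤ hf s c + dist b c := by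
  have t1 := dist_triangle b c ((al*s:ℝ):C)
  unfold hf
  have t2 := dist_nonneg (x := b) (y := c)
  linarith

/-- The space: a line glued (at distance 2) to a circle. -/
def X : Type := ℝ ⊕ C

def A : ℝ → X := Sum.inl
def B : C → X := Sum.inr

def dX : X → X → ℝ
  | Sum.inl s, Sum.inl t => min |s - t| 1
  | Sum.inl s, Sum.inr b => 2 + hf s b
  | Sum.inr b, Sum.inl s => 2 + hf s b
  | Sum.inr b, Sum.inr c => dist b c

instance instX : MetricSpace X where
  dist := dX
  dist_self x := by
    rcases x with s | b
    · simp [dX]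
    · simp [dX]
  dist_comm x y := by
    rcases x with s | b <;> rcases y with t | c <;>
      simp [dX, dist_comm, abs_sub_comm]
  dist_triangle x y z := by
    rcases x with s | b <;> rcases y with t | c <;> rcases z with u | d
    · -- A A A
      show min |s - u| 1 ≤ min |s - t| 1 + min |t - u| 1
      rcases le_total |s - t| 1 with h1 | h1 <;> rcases le_total |t - u| 1 with h2 | h2
      · rw [min_eq_left h1, min_eq_left h2]
        calc min |s - u| 1 ≤ |s - u| := min_le_left _ _
          _ ≤ |s - t| + |t - u| := abs_sub_le _ _ _
      all_goals
        have g1 : (0:ℝ) ≤ |s - t| := abs_nonneg _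
        have g2 : (0:ℝ) ≤ |t - u| := abs_nonneg _
        have g3 : min |s - u| 1 ≤ 1 := min_le_right _ _
        have g4 : (0:ℝ) ≤ min |s - t| 1 := le_min g1 zero_le_one
        have g5 : (0:ℝ) ≤ min |t - u| 1 := le_min g2 zero_le_one
      · rw [min_eq_right h2]; linarith
      · rw [min_eq_right h1]; linarith
      · rw [min_eq_right h1]; linarith
    · -- A A B
      show 2 + hf s d ≤ min |s - t| 1 + (2 + hf t d)
      have := hf_lip₁ s t d; linarith
    · -- A B A
      show min |s - u| 1 ≤ (2 + hf s c) + (2 + hf u c)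
      have g1 := hf_nonneg s c
      have g2 := hf_nonneg u c
      have g3 : min |s - u| 1 ≤ 1 := min_le_right _ _
      linarith
    · -- A B B
      show 2 + hf s d ≤ (2 + hf s c) + dist c d
      have := hf_lip₂ s d c
      have := dist_comm c d
      linarith
    · -- B A A
      show 2 + hf u b ≤ (2 + hf t b) + min |t - u| 1
      have := hf_lip₁ u t b
      have : min |u - t| 1 = min |t - u| 1 := by rw [abs_sub_comm]
      have := hf_lip₁ u t b
      rw [abs_sub_comm] at this
      linarith
    · -- B A B
      show dist b d ≤ (2 + hf t b) + (2 + hf t d)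
      have g1 := hf_nonneg t b
      have g2 := hf_nonneg t d
      have g3 := dist_le_half b d
      linarith
    · -- B B A
      show 2 + hf u b ≤ dist b c + (2 + hf u c)
      have := hf_lip₂ u b c
      linarith
    · -- B B B
      exact dist_triangle b c d
  eq_of_dist_eq_zero := by
    intro x y h
    rcases x with s | b <;> rcases y with t | c
    · by_contra hne
      have hst : s ≠ t := fun h' => hne (by rw [h'])
      have : (0:ℝ) < min |s - t| 1 :=
        lt_min (abs_pos.mpr (sub_ne_zero.mpr hst)) one_pos
      change dX _ _ = 0 at h
      simp only [dX] at h
      linarith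
    · exfalso
      change dX _ _ = 0 at h
      simp only [dX] at h
      have := hf_nonneg s c
      linarith
    · exfalso
      change dX _ _ = 0 at h
      simp only [dX] at h
      have := hf_nonneg t b
      linarith
    · change dX _ _ = 0 at h
      simp only [dX] at h
      rw [dist_eq_zero] at h
      rw [h]

lemma dist_AA (s t : ℝ) : dist (A s) (A t) = min |s - t| 1 := rfl
lemma dist_AB (s : ℝ) (b : C) : dist (A s) (B b) = 2 + hf s b := rfl
lemma dist_BA (s : ℝ) (b : C) : dist (B b) (A s) = 2 + hf s b := rfl
lemma dist_BB (b c : C) : dist (B b) (B c) = dist b c := rfl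

lemma continuous_A : Continuous A := by
  refine (LipschitzWith.of_dist_le_mul (K := 1) fun s t => ?_).continuous
  rw [dist_AA]
  simpa [Real.dist_eq] using min_le_left |s - t| 1

lemma isometry_B : Isometry B := Isometry.of_dist_eq fun b c => rfl

lemma continuous_B : Continuous B := isometry_B.continuous

end GK17

namespace GK17
open Set

lemma coe_int_zero (k : ℤ) : (((k : ℝ)) : C) = 0 :=
  AddCircle.coe_eq_zero_iff _ |>.mpr ⟨k, by simp⟩

lemma coe_real_zero : (((0 : ℝ)) : C) = 0 := by
  simpa using coe_int_zero 0

lemma isOpen_rangeA : IsOpen (Set.range A) := by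
  rw [Metric.isOpen_iff]
  rintro x ⟨s, rfl⟩
  refine ⟨1, one_pos, fun y hy => ?_⟩
  rcases y with t | b
  · exact ⟨t, rfl⟩
  · exfalso
    change dist (B b) (A s) < 1 at hy
    have hy' : 2 + hf s b < 1 := hy
    have := hf_nonneg s b
    linarith

lemma isOpen_rangeB : IsOpen (Set.range B) := by
  rw [Metric.isOpen_iff]
  rintro x ⟨b, rfl⟩
  refine ⟨1, one_pos, fun y hy => ?_⟩
  rcases y with t | c
  · exfalso
    change dist (A t) (B b) < 1 at hy
    have hy' : 2 + hf t b < 1 := hy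
    have := hf_nonneg t b
    linarith
  · exact ⟨c, rfl⟩

def f2 : X → Fin 2 := fun x =>
  match x with
  | Sum.inl _ => 0
  | Sum.inr _ => 1

lemma continuous_f2 : Continuous f2 := by
  rw [continuous_discrete_rng]
  intro b
  have h0 : f2 ⁻¹' {0} = Set.range A := by
    ext x; rcases x with s | c
    · exact ⟨fun _ => ⟨s, rfl⟩, fun _ => rfl⟩
    · exact ⟨fun h => ((by decide : (1 : Fin 2) ≠ 0) h).elim, fun ⟨_, h⟩ => (Sum.inl_ne_inr (h : (Sum.inl _ : ℝ ⊕ C) = Sum.inr c)).elim⟩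
  have h1 : f2 ⁻¹' {1} = Set.range B := by
    ext x; rcases x with s | c
    · exact ⟨fun h => ((by decide : (0 : Fin 2) ≠ 1) h).elim, fun ⟨_, h⟩ => (Sum.inr_ne_inl (h : (Sum.inr _ : ℝ ⊕ C) = Sum.inl s)).elim⟩
    · exact ⟨fun _ => ⟨c, rfl⟩, fun _ => rfl⟩
  match b with
  | 0 => rw [h0]; exact isOpen_rangeA
  | 1 => rw [h1]; exact isOpen_rangeB

lemma coeC_surjective : Function.Surjective (fun r : ℝ => (r : C)) := by
  intro x
  exact Quotient.inductionOn' x fun r => ⟨r, rfl⟩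

lemma continuous_coeC : Continuous (fun r : ℝ => (r : C)) :=
  AddCircle.continuous_mk' 1

lemma isConnected_rangeA : IsConnected (Set.range A) :=
  isConnected_range continuous_A

lemma isConnected_rangeB : IsConnected (Set.range B) := by
  have h : IsConnected (Set.range (B ∘ fun r : ℝ => (r : C))) :=
    isConnected_range (continuous_B.comp continuous_coeC)
  rwa [Set.range_comp, coeC_surjective.range_eq, Set.image_univ] at h

lemma components_equiv : Nonempty (ConnectedComponents X ≃ Fin 2) := by
  have hc := continuous_f2
  refine ⟨Equiv.ofBijective hc.connectedComponentsLift ⟨?_, ?_⟩⟩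
  · intro c d h
    obtain ⟨x, rfl⟩ := ConnectedComponents.surjective_coe c
    obtain ⟨y, rfl⟩ := ConnectedComponents.surjective_coe d
    rw [hc.connectedComponentsLift_apply_coe, hc.connectedComponentsLift_apply_coe] at h
    rcases x with s | b <;> rcases y with t | c
    · refine ConnectedComponents.coe_eq_coe'.mpr ?_
      exact isConnected_rangeA.isPreconnected.subset_connectedComponent ⟨t, rfl⟩ ⟨s, rfl⟩
    · exact absurd h (by simp [f2])
    · exact absurd h (by simp [f2])
    · refine ConnectedComponents.coe_eq_coe'.mpr ?_
      exact isConnected_rangeB.isPreconnected.subset_connectedComponent ⟨c, rfl⟩ ⟨b, rfl⟩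
  · intro v
    fin_cases v
    · exact ⟨(A 0 : X), by rw [hc.connectedComponentsLift_apply_coe]; rfl⟩
    · exact ⟨(B 0 : X), by rw [hc.connectedComponentsLift_apply_coe]; rfl⟩

instance : WeaklyLocallyCompactSpace X := by
  constructor
  intro x
  rcases x with s | b
  · refine ⟨A '' (Set.Icc (s - 1) (s + 1)), isCompact_Icc.image continuous_A, ?_⟩
    refine Metric.mem_nhds_iff.mpr ?_
    refine ⟨1/2, by norm_num, fun y hy => ?_⟩
    replace hy := Metric.mem_ball.mp hy
    rcases y with t | c
    · have hy' : min |t - s| 1 < 1/2 := hy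
      have h1 : |t - s| < 1/2 := by
        rcases le_total |t - s| 1 with h | h
        · rwa [min_eq_left h] at hy'
        · rw [min_eq_right h] at hy'; exact absurd hy' (by norm_num)
      rw [abs_sub_lt_iff] at h1
      exact ⟨t, ⟨by linarith, by linarith⟩, rfl⟩
    · exfalso
      have hy' : 2 + hf s c < 1/2 := hy
      have := hf_nonneg s c
      linarith
  · refine ⟨Set.range B, isCompact_range continuous_B, ?_⟩
    refine Metric.mem_nhds_iff.mpr ?_
    refine ⟨1, one_pos, fun y hy => ?_⟩
    replace hy := Metric.mem_ball.mp hy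
    rcases y with t | c
    · exfalso
      have hy' : 2 + hf t b < 1 := hy
      have := hf_nonneg t b
      linarith
    · exact ⟨c, rfl⟩

instance : LocallyCompactSpace X := inferInstance

/-- projections used for completeness -/
def pA : X → ℝ := fun x => match x with | Sum.inl s => s | Sum.inr _ => 0
def pB : X → C := fun x => match x with | Sum.inl _ => 0 | Sum.inr b => b

instance : CompleteSpace X := by
  apply Metric.complete_of_cauchySeq_tendsto
  intro u hu
  obtain ⟨N, hN⟩ := Metric.cauchySeq_iff.mp hu 1 one_pos
  rcases hUN : u N with s₀ | b₀
  · -- eventually in the line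
    have hA : ∀ n, N ≤ n → u n = A (pA (u n)) := by
      intro n hn
      rcases h : u n with t | c
      · rfl
      · exfalso
        have := hN n hn N le_rfl
        rw [h, hUN] at this
        have h2 : 2 + hf s₀ c < 1 := this
        have := hf_nonneg s₀ c
        linarith
    set v : ℕ → ℝ := fun n => pA (u (N + n)) with hv
    have hvdist : ∀ m n : ℕ, dist (u (N + m)) (u (N + n)) = min |v m - v n| 1 := by
      intro m n
      rw [hA (N + m) (Nat.le_add_right _ _), hA (N + n) (Nat.le_add_right _ _)]
      rfl
    have hvC : CauchySeq v := by
      rw [Metric.cauchySeq_iff]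
      intro ε hε
      obtain ⟨M, hM⟩ := Metric.cauchySeq_iff.mp hu (min ε 1) (lt_min hε one_pos)
      refine ⟨M, fun m hm n hn => ?_⟩
      have h1 := hM (N + m) (le_trans hm (Nat.le_add_left _ _)) (N + n)
        (le_trans hn (Nat.le_add_left _ _))
      rw [hvdist m n] at h1
      have h2 : |v m - v n| < min ε 1 := by
        by_contra hcon
        push_neg at hcon
        have : min ε 1 ≤ min |v m - v n| 1 := le_min hcon (min_le_right _ _)
        linarith
      rw [Real.dist_eq]
      exact lt_of_lt_of_le h2 (min_le_left _ _)
    obtain ⟨l, hl⟩ := cauchySeq_tendsto_of_complete hvC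
    refine ⟨A l, ?_⟩
    rw [Metric.tendsto_atTop]
    intro ε hε
    obtain ⟨M, hM⟩ := Metric.tendsto_atTop.mp hl ε hε
    refine ⟨N + M, fun n hn => ?_⟩
    have hn' : N ≤ n := le_trans (Nat.le_add_right _ _) hn
    have heq : u n = A (v (n - N)) := by
      rw [hv]
      simp only []
      rw [show N + (n - N) = n from by omega]
      exact hA n hn'
    rw [heq, show dist (A (v (n - N))) (A l) = min |v (n - N) - l| 1 from rfl]
    have := hM (n - N) (by omega)
    rw [Real.dist_eq] at this
    exact lt_of_le_of_lt (min_le_left _ _) this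
  · -- eventually in the circle
    have hB : ∀ n, N ≤ n → u n = B (pB (u n)) := by
      intro n hn
      rcases h : u n with t | c
      · exfalso
        have := hN n hn N le_rfl
        rw [h, hUN] at this
        have h2 : 2 + hf t b₀ < 1 := this
        have := hf_nonneg t b₀
        linarith
      · rfl
    set w : ℕ → C := fun n => pB (u (N + n)) with hw
    have hwdist : ∀ m n : ℕ, dist (u (N + m)) (u (N + n)) = dist (w m) (w n) := by
      intro m n
      rw [hB (N + m) (Nat.le_add_right _ _), hB (N + n) (Nat.le_add_right _ _)]
      rfl
    have hwC : CauchySeq w := by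
      rw [Metric.cauchySeq_iff]
      intro ε hε
      obtain ⟨M, hM⟩ := Metric.cauchySeq_iff.mp hu ε hε
      refine ⟨M, fun m hm n hn => ?_⟩
      have h1 := hM (N + m) (le_trans hm (Nat.le_add_left _ _)) (N + n)
        (le_trans hn (Nat.le_add_left _ _))
      rwa [hwdist m n] at h1
    obtain ⟨l, hl⟩ := cauchySeq_tendsto_of_complete hwC
    refine ⟨B l, ?_⟩
    rw [Metric.tendsto_atTop]
    intro ε hε
    obtain ⟨M, hM⟩ := Metric.tendsto_atTop.mp hl ε hε
    refine ⟨N + M, fun n hn => ?_⟩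
    have hn' : N ≤ n := le_trans (Nat.le_add_right _ _) hn
    have heq : u n = B (w (n - N)) := by
      rw [hw]
      simp only []
      rw [show N + (n - N) = n from by omega]
      exact hB n hn'
    rw [heq, dist_BB]
    exact hM (n - N) (by omega)

end GK17

namespace GK17
open Set

/-- the circle point `al * k` -/
def q (k : ℤ) : C := ((al * k : ℝ) : C)

lemma hf_shift (k : ℤ) (s : ℝ) (b : C) : hf (s + k) (b + q k) = hf s b := by
  unfold hf q
  have h1 : ((al * (s + k) : ℝ) : C) = ((al * s : ℝ) : C) + ((al * k : ℝ) : C) := by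
    rw [← AddCircle.coe_add]
    ring_nf
  have h2 : (((s + k : ℝ)) : C) = ((s : ℝ) : C) := by
    rw [AddCircle.coe_add, coe_int_zero, add_zero]
  rw [h1, h2, dist_add_right]

/-- the shift isometries, giving the lower bound for the orbit -/
lemma mem_orbit (k : ℤ) :
    ∃ φ : X → X, Function.Surjective φ ∧ Isometry φ ∧ φ (B 0) = B (q k) := by
  refine ⟨fun x => match x with
    | Sum.inl s => Sum.inl (s + k)
    | Sum.inr b => Sum.inr (b + q k), ?_, ?_, ?_⟩
  · intro y
    rcases y with t | c
    · exact ⟨Sum.inl (t - k), by simp; rfl⟩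
    · exact ⟨Sum.inr (c - q k), by simp; rfl⟩
  · apply Isometry.of_dist_eq
    intro x y
    rcases x with s | b <;> rcases y with t | c
    · show min |s + k - (t + k)| 1 = min |s - t| 1
      ring_nf
    · show 2 + hf (s + k) (c + q k) = 2 + hf s c
      rw [hf_shift]
    · show 2 + hf (t + k) (b + q k) = 2 + hf t b
      rw [hf_shift]
    · show dist (b + q k) (c + q k) = dist b c
      exact dist_add_right b c (q k)
  · show Sum.inr (0 + q k) = B (q k)
    rw [zero_add]
    rfl

/-- upper bound: every isometry sends the circle basepoint into `{q k}` -/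
lemma orbit_subset {φ : X → X} (hiso : Isometry φ) : ∃ k : ℤ, φ (B 0) = B (q k) := by
  have h01 : dist (φ (A 0)) (φ (A 1)) = 1 := by
    rw [hiso.dist_eq, dist_AA]
    norm_num
  obtain ⟨t, ht⟩ : ∃ t, φ (A 0) = Sum.inl t := by
    rcases hA0 : φ (A 0) with t | b
    · exact ⟨t, rfl⟩
    · exfalso
      rcases hA1 : φ (A 1) with t' | c
      · rw [hA0, hA1] at h01
        have h2 : 2 + hf t' b = 1 := h01
        have := hf_nonneg t' b
        linarith
      · rw [hA0, hA1] at h01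
        have h2 : dist b c = 1 := h01
        have := dist_le_half b c
        linarith
  have hx : dist (φ (A 0)) (φ (B 0)) = 2 := by
    rw [hiso.dist_eq, dist_AB]
    have e1 : ((al * (0:ℝ) : ℝ) : C) = 0 := by
      rw [mul_zero]; exact coe_real_zero
    unfold hf
    rw [e1, coe_real_zero]
    simp
  obtain ⟨β, hβ⟩ : ∃ β, φ (B 0) = Sum.inr β := by
    rcases hB0 : φ (B 0) with t' | c
    · exfalso
      rw [ht, hB0] at hx
      have h2 : min |t - t'| 1 = 2 := hx
      have : min |t - t'| 1 ≤ 1 := min_le_right _ _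
      linarith
    · exact ⟨c, rfl⟩
  rw [ht, hβ] at hx
  have h2 : 2 + hf t β = 2 := hx
  have h3 : hf t β = 0 := by linarith
  have d1 : dist β ((al * t : ℝ) : C) = 0 ∧ dist ((t : ℝ) : C) 0 = 0 := by
    have := dist_nonneg (x := β) (y := ((al * t : ℝ) : C))
    have := dist_nonneg (x := ((t : ℝ) : C)) (y := (0 : C))
    unfold hf at h3
    constructor <;> linarith
  have hβ1 : β = ((al * t : ℝ) : C) := by
    have := d1.1
    rwa [dist_eq_zero] at this
  have ht1 : ((t : ℝ) : C) = 0 := by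
    have := d1.2
    rwa [dist_eq_zero] at this
  obtain ⟨k, hk⟩ := (AddCircle.coe_eq_zero_iff _).mp ht1
  have htk : t = (k : ℝ) := by
    rw [← hk, zsmul_eq_mul, mul_one]
  refine ⟨k, ?_⟩
  rw [hβ, hβ1, htk]
  rfl

/-- the subgroup `ℤ·al + ℤ` of `ℝ` -/
def G : AddSubgroup ℝ where
  carrier := {x | ∃ k m : ℤ, x = al * k + m}
  add_mem' := by
    rintro x y ⟨k, m, rfl⟩ ⟨k', m', rfl⟩
    exact ⟨k + k', m + m', by push_cast; ring⟩
  zero_mem' := ⟨0, 0, by push_cast; ring⟩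
  neg_mem' := by
    rintro x ⟨k, m, rfl⟩
    exact ⟨-k, -m, by push_cast; ring⟩

lemma G_not_closed : ¬ IsClosed (G : Set ℝ) := by
  intro hcl
  rcases AddSubgroup.dense_or_cyclic G with hdense | ⟨a, ha⟩
  · have huniv : (G : Set ℝ) = Set.univ := by
      rw [← hdense.closure_eq, hcl.closure_eq]
    have hmem : al / 2 ∈ (G : Set ℝ) := by rw [huniv]; trivial
    obtain ⟨k, m, hkm⟩ := hmem
    refine al_combo (p := 2 * m) (q := 1 - 2 * k) (by omega) ?_
    push_cast
    linarith
  · have h1 : (1 : ℝ) ∈ G := ⟨0, 1, by push_cast; ring⟩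
    have h2 : al ∈ G := ⟨1, 0, by push_cast; ring⟩
    rw [ha, AddSubgroup.mem_closure_singleton] at h1 h2
    obtain ⟨n, hn⟩ := h1
    obtain ⟨n', hn'⟩ := h2
    rw [zsmul_eq_mul] at hn hn'
    have hn0 : n ≠ 0 := by
      rintro rfl
      simp at hn
    refine al_combo (p := n') (q := n) hn0 ?_
    have : (n : ℝ) * al = n * (n' * a) := by rw [hn']
    rw [this]
    push_cast
    linear_combination (n' : ℝ) * hn

theorem main :
    ∃ (X : Type) (_ : MetricSpace X),
      CompleteSpace X ∧
      LocallyCompactSpace X ∧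
      Nonempty (ConnectedComponents X ≃ Fin 2) ∧
      ∃ x : X, ¬ IsClosed
        {y : X | ∃ φ : X → X, Function.Surjective φ ∧ Isometry φ ∧ φ x = y} := by
  refine ⟨X, inferInstance, inferInstance, inferInstance, components_equiv, B 0, ?_⟩
  intro hcl
  have hS : {y : X | ∃ φ : X → X, Function.Surjective φ ∧ Isometry φ ∧ φ (B 0) = y}
      = {y : X | ∃ k : ℤ, y = B (q k)} := by
    ext y
    constructor
    · rintro ⟨φ, -, hiso, rfl⟩
      obtain ⟨k, hk⟩ := orbit_subset hiso
      exact ⟨k, hk⟩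
    · rintro ⟨k, rfl⟩
      exact mem_orbit k
  rw [hS] at hcl
  -- pull back along B and the projection ℝ → C
  have hR : IsClosed {b : C | ∃ k : ℤ, b = q k} := by
    have : {b : C | ∃ k : ℤ, b = q k} = B ⁻¹' {y : X | ∃ k : ℤ, y = B (q k)} := by
      ext b
      simp only [Set.mem_setOf_eq, Set.mem_preimage]
      constructor
      · rintro ⟨k, rfl⟩; exact ⟨k, rfl⟩
      · rintro ⟨k, hk⟩
        exact ⟨k, Sum.inr_injective hk⟩
    rw [this]
    exact hcl.preimage continuous_B
  have hGs : ((fun r : ℝ => (r : C)) ⁻¹' {b : C | ∃ k : ℤ, b = q k}) = (G : Set ℝ) := by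
    ext x
    simp only [Set.mem_preimage, Set.mem_setOf_eq]
    constructor
    · rintro ⟨k, hk⟩
      unfold q at hk
      have : ((x - al * k : ℝ) : C) = 0 := by
        rw [AddCircle.coe_sub, hk, sub_self]
      obtain ⟨m, hm⟩ := (AddCircle.coe_eq_zero_iff _).mp this
      rw [zsmul_eq_mul, mul_one] at hm
      exact ⟨k, m, by linarith⟩
    · rintro ⟨k, m, rfl⟩
      refine ⟨k, ?_⟩
      unfold q
      rw [AddCircle.coe_add, coe_int_zero, add_zero]
  exact G_not_closed (hGs ▸ hR.preimage continuous_coeC)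

end GK17

end

/-- there exists a metric space `X` that is complete, locally
compact, and has exactly two connected components, such that the group of
surjective isometries of `X` has an orbit that is not closed in `X`.
(This answers negatively the question of Gao and Kechris.) -/
theorem exists_complete_locallyCompact_two_components_nonclosed_orbit :
    ∃ (X : Type) (_ : MetricSpace X),
      CompleteSpace X ∧
      LocallyCompactSpace X ∧
      Nonempty (ConnectedComponents X ≃ Fin 2) ∧
      ∃ x : X, ¬ IsClosed
        {y : X | ∃ φ : X → X, Function.Surjective φ ∧ Isometry φ ∧ φ x = y} := by
  exact GK17.main
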